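/- arXiv:2512.08677 — 2 statements merged into one kernel-verified Lean document; each statement's English description precedes it below -/
import Mathlib

section
/- If f : X → X is a cw-expansive homeomorphism with cw-expansivity constant 2ε, then for every x ∈ X the stable continuum C^s_ε(x) is contained in the stable set W^s(x) and the unstable continuum C^u_ε(x) is contained in the unstable set W^u(x); consequently C^s_ε(x) ⊆ V^s_ε(x) and C^u_ε(x) ⊆ V^u_ε(x). -/
open Topology Filter Metric TopologicalSpace

namespace LS

variable {X Y : Type*} [MetricSpace X] [MetricSpace Y]

/-- finite forward iterates of a homeomorphism -/
def hpowAux (f : X ≃ₜ X) : ℕ → X ≃ₜ X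
  | 0 => Homeomorph.refl X
  | n+1 => (hpowAux f n).trans f

/-- `ℤ`-iterates of a homeomorphism: `hpow f k` is the `k`-th iterate `f^k`. -/
def hpow (f : X ≃ₜ X) : ℤ → X ≃ₜ X
  | Int.ofNat n => hpowAux f n
  | Int.negSucc n => (hpowAux f (n+1)).symm

/-- the `ℤ`-iteration map of `f` -/
def F (f : X ≃ₜ X) : ℤ → X → X := fun k => hpow f k

/-- δ-limit-pseudo-orbit for a system given by its iterate family `T` -/
def IsLimitPseudoOrbit (T : ℤ → Y → Y) (δ : ℝ) (x : ℤ → Y) : Prop :=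
  (∀ k : ℤ, dist (T 1 (x k)) (x (k+1)) ≤ δ) ∧
  Tendsto (fun k : ℤ => dist (T 1 (x k)) (x (k+1))) (cocompact ℤ) (𝓝 0)

/-- `z` ε-limit-shadows the sequence `x` -/
def LimitShadows (T : ℤ → Y → Y) (ε : ℝ) (x : ℤ → Y) (z : Y) : Prop :=
  (∀ k : ℤ, dist (T k z) (x k) ≤ ε) ∧
  Tendsto (fun k : ℤ => dist (T k z) (x k)) (cocompact ℤ) (𝓝 0)

/-- the L-shadowing property -/
def LShadowing (T : ℤ → Y → Y) : Prop :=
  ∀ ε > (0:ℝ), ∃ δ > (0:ℝ), ∀ x : ℤ → Y, IsLimitPseudoOrbit T δ x → ∃ z, LimitShadows T ε x z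

/-- the shadowing property -/
def Shadowing (T : ℤ → Y → Y) : Prop :=
  ∀ ε > (0:ℝ), ∃ δ > (0:ℝ), ∀ x : ℤ → Y,
    (∀ k : ℤ, dist (T 1 (x k)) (x (k+1)) < δ) → ∃ z, ∀ k : ℤ, dist (T k z) (x k) < ε

/-- local c-stable set -/
def Ws (f : X ≃ₜ X) (c : ℝ) (x : X) : Set X :=
  {y | ∀ k : ℤ, 0 ≤ k → dist (F f k y) (F f k x) ≤ c}

/-- local c-unstable set -/
def Wu (f : X ≃ₜ X) (c : ℝ) (x : X) : Set X :=
  {y | ∀ k : ℤ, k ≤ 0 → dist (F f k y) (F f k x) ≤ c}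

/-- stable set -/
def WsA (f : X ≃ₜ X) (x : X) : Set X :=
  {y | Tendsto (fun k : ℤ => dist (F f k y) (F f k x)) atTop (𝓝 0)}

/-- unstable set -/
def WuA (f : X ≃ₜ X) (x : X) : Set X :=
  {y | Tendsto (fun k : ℤ => dist (F f k y) (F f k x)) atBot (𝓝 0)}

/-- asymptotic local stable set -/
def Vs (f : X ≃ₜ X) (c : ℝ) (x : X) : Set X := WsA f x ∩ Ws f c x

/-- asymptotic local unstable set -/
def Vu (f : X ≃ₜ X) (c : ℝ) (x : X) : Set X := WuA f x ∩ Wu f c x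

/-- image of a nonempty compact set under a homeomorphism -/
def himg (f : X ≃ₜ X) (A : NonemptyCompacts X) : NonemptyCompacts X :=
  ⟨⟨f '' A, A.isCompact.image f.continuous⟩, A.nonempty.image f⟩

/-- the `ℤ`-iteration family of the induced hyperspace map `2^f` -/
def HF (f : X ≃ₜ X) : ℤ → NonemptyCompacts X → NonemptyCompacts X :=
  fun k A => himg (hpow f k) A

end LS


namespace LS

variable {X Y : Type*} [MetricSpace X] [MetricSpace Y]

lemma hpowAux_succ (f : X ≃ₜ X) (n : ℕ) (z : X) : hpowAux f (n+1) z = f (hpowAux f n z) := rfl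

lemma hpowAux_comm (f : X ≃ₜ X) (n : ℕ) (z : X) : hpowAux f n (f z) = f (hpowAux f n z) := by
  induction n with
  | zero => rfl
  | succ n ih => rw [hpowAux_succ, hpowAux_succ, ih]

lemma hpowAux_symm_comm (f : X ≃ₜ X) (n : ℕ) (z : X) :
    (hpowAux f n).symm (f z) = f ((hpowAux f n).symm z) := by
  calc (hpowAux f n).symm (f z)
      = (hpowAux f n).symm (hpowAux f n (f ((hpowAux f n).symm z))) := by
        rw [hpowAux_comm, Homeomorph.apply_symm_apply]
    _ = f ((hpowAux f n).symm z) := Homeomorph.symm_apply_apply _ _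

lemma F_zero (f : X ≃ₜ X) (z : X) : F f 0 z = z := rfl

lemma F_succ (f : X ≃ₜ X) (k : ℤ) (z : X) : F f (k+1) z = f (F f k z) := by
  cases k with
  | ofNat n =>
    show F f (Int.ofNat (n+1)) z = f (F f (Int.ofNat n) z)
    rfl
  | negSucc n =>
    cases n with
    | zero =>
      show F f 0 z = f (F f (Int.negSucc 0) z)
      show z = f ((hpowAux f 1).symm z)
      have : (hpowAux f 1).symm z = f.symm z := rfl
      rw [this, Homeomorph.apply_symm_apply]
    | succ n =>
      have h1 : Int.negSucc (n+1) + 1 = Int.negSucc n := by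
        rw [Int.negSucc_eq, Int.negSucc_eq]; push_cast; ring
      rw [h1]
      show (hpowAux f (n+1)).symm z = f ((hpowAux f (n+2)).symm z)
      have h2 : (hpowAux f (n+2)).symm z = (hpowAux f (n+1)).symm (f.symm z) := rfl
      rw [h2, ← hpowAux_symm_comm, Homeomorph.apply_symm_apply]

lemma F_pred (f : X ≃ₜ X) (k : ℤ) (z : X) : F f (k-1) z = f.symm (F f k z) := by
  have h := F_succ f (k-1) z
  rw [sub_add_cancel] at h
  rw [h, Homeomorph.symm_apply_apply]

lemma F_add (f : X ≃ₜ X) (m k : ℤ) (z : X) : F f (k + m) z = F f k (F f m z) := by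
  induction k using Int.induction_on with
  | zero => rw [zero_add]; rfl
  | succ i ih =>
    have h : (i:ℤ)+1+m = (i+m)+1 := by ring
    rw [h, F_succ, ih, F_succ]
  | pred i ih =>
    have h : (-i:ℤ)-1+m = (-i+m)-1 := by ring
    rw [h, F_pred, ih, F_pred]

lemma F_continuous (f : X ≃ₜ X) (k : ℤ) : Continuous (F f k) := (hpow f k).continuous

lemma F_symm (f : X ≃ₜ X) (k : ℤ) (z : X) : F f.symm k z = F f (-k) z := by
  induction k using Int.induction_on with
  | zero => rfl
  | succ i ih =>
    rw [F_succ, ih, show -((i:ℤ)+1) = -i-1 by ring, F_pred]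
  | pred i ih =>
    rw [show (-i:ℤ)-1 = (-i-1) by ring, F_pred, ih,
      show -(-(i:ℤ)-1) = -(-i)+1 by ring, F_succ, Homeomorph.symm_symm]

lemma Ws_symm (f : X ≃ₜ X) (c : ℝ) (x : X) : Ws f.symm c x = Wu f c x := by
  ext y
  simp only [Ws, Wu, Set.mem_setOf_eq]
  constructor
  · intro h k hk
    have := h (-k) (by omega)
    simpa [F_symm, neg_neg] using this
  · intro h k hk
    rw [F_symm, F_symm]
    exact h (-k) (by omega)

lemma Wu_symm (f : X ≃ₜ X) (c : ℝ) (x : X) : Wu f.symm c x = Ws f c x := by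
  rw [← Ws_symm, Homeomorph.symm_symm]

lemma WsA_symm (f : X ≃ₜ X) (x : X) : WsA f.symm x = WuA f x := by
  ext y
  simp only [WsA, WuA, Set.mem_setOf_eq]
  constructor
  · intro h
    have := h.comp (tendsto_neg_atBot_atTop (G := ℤ))
    simpa [Function.comp_def, F_symm, neg_neg] using this
  · intro h
    have := h.comp (tendsto_neg_atTop_atBot (G := ℤ))
    simpa [Function.comp_def, F_symm, neg_neg] using this

lemma isClosed_Ws (f : X ≃ₜ X) (c : ℝ) (x : X) : IsClosed (Ws f c x) := by
  have : Ws f c x = ⋂ (k : ℤ) (_ : 0 ≤ k), {y | dist (F f k y) (F f k x) ≤ c} := by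
    ext y; simp [Ws]
  rw [this]
  exact isClosed_iInter fun k => isClosed_iInter fun _ =>
    isClosed_le ((F_continuous f k).dist continuous_const) continuous_const

lemma hEdist_ne_top (A B : NonemptyCompacts X) :
    EMetric.hausdorffEdist (A : Set X) (B : Set X) ≠ ⊤ :=
  hausdorffEdist_ne_top_of_nonempty_of_bounded A.nonempty B.nonempty
    A.isCompact.isBounded B.isCompact.isBounded

lemma mem_limit {A : ℕ → NonemptyCompacts X} {D : NonemptyCompacts X}
    (hA : Tendsto A atTop (𝓝 D)) {a : ℕ → X} {b : X} (ha : ∀ n, a n ∈ (A n : Set X))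
    (hb : Tendsto a atTop (𝓝 b)) : b ∈ (D : Set X) := by
  have hHD : Tendsto (fun n => dist (A n) D) atTop (𝓝 0) :=
    tendsto_iff_dist_tendsto_zero.mp hA
  have h0 : Tendsto (fun n => infDist (a n) (D : Set X)) atTop (𝓝 0) := by
    refine squeeze_zero (fun n => infDist_nonneg) (fun n => ?_) hHD
    exact infDist_le_hausdorffDist_of_mem (ha n) (hEdist_ne_top _ _)
  have h1 : Tendsto (fun n => infDist (a n) (D : Set X)) atTop (𝓝 (infDist b (D : Set X))) :=
    ((continuous_infDist_pt (D : Set X)).tendsto b).comp hb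
  have h2 : infDist b (D : Set X) = 0 := tendsto_nhds_unique h1 h0
  exact (D.isCompact.isClosed.mem_iff_infDist_zero D.nonempty).mpr h2

lemma approx {A : ℕ → NonemptyCompacts X} {D : NonemptyCompacts X}
    (hA : Tendsto A atTop (𝓝 D)) {u : X} (hu : u ∈ (D : Set X)) :
    ∃ a : ℕ → X, (∀ n, a n ∈ (A n : Set X)) ∧ Tendsto a atTop (𝓝 u) := by
  have hsel : ∀ n, ∃ y ∈ (A n : Set X), infDist u (A n : Set X) = dist u y :=
    fun n => (A n).isCompact.exists_infDist_eq_dist (A n).nonempty u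
  choose a ha hda using hsel
  refine ⟨a, ha, ?_⟩
  rw [tendsto_iff_dist_tendsto_zero]
  have hHD : Tendsto (fun n => dist (A n) D) atTop (𝓝 0) :=
    tendsto_iff_dist_tendsto_zero.mp hA
  refine squeeze_zero (fun n => dist_nonneg) (fun n => ?_) hHD
  rw [dist_comm, ← hda n]
  calc infDist u (A n : Set X) ≤ hausdorffDist (D : Set X) (A n : Set X) :=
        infDist_le_hausdorffDist_of_mem hu (hEdist_ne_top _ _)
    _ = dist (A n) D := by rw [NonemptyCompacts.dist_eq, hausdorffDist_comm]

lemma limit_connected {A : ℕ → NonemptyCompacts X} {D : NonemptyCompacts X}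
    (hA : Tendsto A atTop (𝓝 D)) (hconn : ∀ n, IsPreconnected (A n : Set X)) :
    IsPreconnected (D : Set X) := by
  by_contra hD
  rw [IsPreconnected] at hD
  push_neg at hD
  obtain ⟨U, V, hU, hV, hDUV, ⟨u0, hu0⟩, ⟨v0, hv0⟩, hempty⟩ := hD
  set As : Set X := (D : Set X) \ V with hAs
  set Bs : Set X := (D : Set X) \ U with hBs
  have hAclosed : IsClosed As := D.isCompact.isClosed.sdiff hV
  have hBclosed : IsClosed Bs := D.isCompact.isClosed.sdiff hU
  have hAcomp : IsCompact As := D.isCompact.of_isClosed_subset hAclosed Set.diff_subset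
  have hdisj : Disjoint As Bs := by
    rw [Set.disjoint_left]
    rintro z ⟨hzD, hzV⟩ ⟨-, hzU⟩
    rcases hDUV hzD with h | h
    · exact hzU h
    · exact hzV h
  have hunion : (D : Set X) ⊆ As ∪ Bs := by
    intro z hz
    by_cases hzU : z ∈ U
    · left
      refine ⟨hz, fun hzV => ?_⟩
      have : z ∈ (D : Set X) ∩ (U ∩ V) := ⟨hz, hzU, hzV⟩
      rw [hempty] at this
      exact this
    · right; exact ⟨hz, hzU⟩
  have huA : u0 ∈ As := by
    refine ⟨hu0.1, fun hzV => ?_⟩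
    have : u0 ∈ (D : Set X) ∩ (U ∩ V) := ⟨hu0.1, hu0.2, hzV⟩
    rw [hempty] at this
    exact this
  have hvB : v0 ∈ Bs := by
    refine ⟨hv0.1, fun hzU => ?_⟩
    have : v0 ∈ (D : Set X) ∩ (U ∩ V) := ⟨hv0.1, hzU, hv0.2⟩
    rw [hempty] at this
    exact this
  obtain ⟨r, hr, hthick⟩ := hdisj.exists_thickenings hAcomp hBclosed
  have hev : ∀ᶠ n in atTop, dist (A n) D < r := by
    have := hA (Metric.ball_mem_nhds D hr)
    filter_upwards [this] with n hn
    exact mem_ball.mp hn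
  obtain ⟨n, hn⟩ := hev.exists
  have hfin := hEdist_ne_top (A n) D
  have hsub : (A n : Set X) ⊆ thickening r As ∪ thickening r Bs := by
    intro z hz
    obtain ⟨d, hd, hdz⟩ := exists_dist_lt_of_hausdorffDist_lt hz hn hfin
    rcases hunion hd with h | h
    · left; exact mem_thickening_iff.mpr ⟨d, h, hdz⟩
    · right; exact mem_thickening_iff.mpr ⟨d, h, hdz⟩
  have hdist' : hausdorffDist (D : Set X) (A n : Set X) < r := by
    rw [hausdorffDist_comm]; exact hn
  have hfin' := hEdist_ne_top D (A n)
  have hmeetA : ((A n : Set X) ∩ thickening r As).Nonempty := by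
    obtain ⟨z, hz, hdz⟩ := exists_dist_lt_of_hausdorffDist_lt hu0.1 hdist' hfin'
    exact ⟨z, hz, mem_thickening_iff.mpr ⟨u0, huA, by rwa [dist_comm]⟩⟩
  have hmeetB : ((A n : Set X) ∩ thickening r Bs).Nonempty := by
    obtain ⟨z, hz, hdz⟩ := exists_dist_lt_of_hausdorffDist_lt hv0.1 hdist' hfin'
    exact ⟨z, hz, mem_thickening_iff.mpr ⟨v0, hvB, by rwa [dist_comm]⟩⟩
  obtain ⟨z, -, hz1, hz2⟩ := hconn n (thickening r As) (thickening r Bs)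
    isOpen_thickening isOpen_thickening hsub hmeetA hmeetB
  exact (hthick.le_bot ⟨hz1, hz2⟩)

lemma stable_main {X : Type*} [MetricSpace X] [CompactSpace X] (f : X ≃ₜ X)
    (ε : ℝ) (hε : 0 < ε)
    (hcw : ∀ x : X, IsTotallyDisconnected (Ws f (2*ε) x ∩ Wu f (2*ε) x)) (x : X) :
    connectedComponentIn (Ws f ε x) x ⊆ WsA f x := by
  intro y hy
  have hxW : x ∈ Ws f ε x := by
    intro k hk
    simp only [dist_self]
    linarith
  have hCconn : IsConnected (connectedComponentIn (Ws f ε x) x) :=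
    isConnected_connectedComponentIn_iff.mpr hxW
  set K := closure (connectedComponentIn (Ws f ε x) x) with hKdef
  have hKconn : IsConnected K := ⟨hCconn.nonempty.mono subset_closure,
    hCconn.isPreconnected.closure⟩
  have hKsub : K ⊆ Ws f ε x :=
    closure_minimal (connectedComponentIn_subset _ _) (isClosed_Ws f ε x)
  have hKcomp : IsCompact K := isClosed_closure.isCompact
  have hxK : x ∈ K := subset_closure (mem_connectedComponentIn hxW)
  have hyK : y ∈ K := subset_closure hy
  have hK2 : ∀ z ∈ K, ∀ w ∈ K, ∀ m : ℤ, 0 ≤ m → dist (F f m z) (F f m w) ≤ 2*ε := by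
    intro z hz w hw m hm
    calc dist (F f m z) (F f m w)
        ≤ dist (F f m z) (F f m x) + dist (F f m x) (F f m w) := dist_triangle _ _ _
      _ ≤ ε + ε := add_le_add (hKsub hz m hm) (by rw [dist_comm]; exact hKsub hw m hm)
      _ = 2*ε := by ring
  show Tendsto (fun j : ℤ => dist (F f j y) (F f j x)) atTop (𝓝 0)
  by_contra hnot
  rw [Metric.tendsto_atTop] at hnot
  push_neg at hnot
  obtain ⟨δ, hδ, hfreq⟩ := hnot
  choose g hg1 hg2 using hfreq
  have hgd : ∀ N : ℤ, δ ≤ dist (F f (g N) y) (F f (g N) x) := by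
    intro N
    have h := hg2 N
    rwa [Real.dist_0_eq_abs, abs_of_nonneg dist_nonneg] at h
  set k : ℕ → ℤ := fun n => g n with hkdef
  have hk_tendsto : Tendsto k atTop atTop :=
    tendsto_atTop_mono (fun n => hg1 (n:ℤ)) tendsto_natCast_atTop_atTop
  set KC : NonemptyCompacts X := ⟨⟨K, hKcomp⟩, ⟨x, hxK⟩⟩ with hKC
  set A : ℕ → NonemptyCompacts X := fun n => himg (hpow f (k n)) KC with hAdef
  have hAset : ∀ n, (A n : Set X) = F f (k n) '' K := fun n => rfl
  obtain ⟨⟨D, q, p⟩, -, φ, hφ, hconv⟩ := isCompact_univ.tendsto_subseq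
    (x := fun n => ((A n, F f (k n) y, F f (k n) x) : NonemptyCompacts X × X × X))
    (fun n => Set.mem_univ _)
  simp only [Function.comp_def] at hconv
  rw [nhds_prod_eq, tendsto_prod_iff'] at hconv
  obtain ⟨hA, hconv2⟩ := hconv
  rw [nhds_prod_eq, tendsto_prod_iff'] at hconv2
  obtain ⟨hq, hp⟩ := hconv2
  simp only at hA hp hq
  have hk'_tendsto : Tendsto (fun n => k (φ n)) atTop atTop :=
    hk_tendsto.comp hφ.tendsto_atTop
  have hqD : q ∈ (D : Set X) :=
    mem_limit hA (a := fun n => F f (k (φ n)) y) (fun n => ⟨y, hyK, rfl⟩) hq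
  have hpD : p ∈ (D : Set X) :=
    mem_limit hA (a := fun n => F f (k (φ n)) x) (fun n => ⟨x, hxK, rfl⟩) hp
  have hdpq : δ ≤ dist q p :=
    ge_of_tendsto (hq.dist hp) (Eventually.of_forall fun n => hgd _)
  have hDconn : IsPreconnected (D : Set X) := by
    refine limit_connected hA (fun n => ?_)
    rw [hAset]
    exact (hKconn.image _ (F_continuous f (k (φ n))).continuousOn).isPreconnected
  have key : ∀ u ∈ (D : Set X), ∀ v ∈ (D : Set X), ∀ m : ℤ,
      dist (F f m u) (F f m v) ≤ 2*ε := by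
    intro u hu v hv m
    obtain ⟨a, haA, hau⟩ := approx hA hu
    obtain ⟨b, hbA, hbv⟩ := approx hA hv
    have hc : Tendsto (fun n => dist (F f m (a n)) (F f m (b n))) atTop
        (𝓝 (dist (F f m u) (F f m v))) :=
      (((F_continuous f m).tendsto u).comp hau).dist (((F_continuous f m).tendsto v).comp hbv)
    refine le_of_tendsto hc ?_
    have hev : ∀ᶠ n in atTop, -m ≤ k (φ n) := hk'_tendsto.eventually_ge_atTop (-m)
    filter_upwards [hev] with n hn
    obtain ⟨z, hz, hza⟩ := (hAset (φ n)) ▸ haA n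
    obtain ⟨w, hw, hwb⟩ := (hAset (φ n)) ▸ hbA n
    rw [← hza, ← hwb, ← F_add, ← F_add]
    exact hK2 z hz w hw _ (by omega)
  have hsub : (D : Set X) ⊆ Ws f (2*ε) p ∩ Wu f (2*ε) p :=
    fun u hu => ⟨fun j _ => key u hu p hpD j, fun j _ => key u hu p hpD j⟩
  have hsing := hcw p _ hsub hDconn
  have hqp : q = p := hsing hqD hpD
  rw [hqp, dist_self] at hdpq
  linarith

end LS

/-- for a cw-expansive homeomorphism with cw-expansivity constant `2ε`,
local stable/unstable continua are contained in the stable/unstable sets, hence in the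
asymptotic local stable/unstable sets. -/
theorem stmt_9 {X : Type*} [MetricSpace X] [CompactSpace X] (f : X ≃ₜ X)
    (ε : ℝ) (hε : 0 < ε)
    (hcw : ∀ x : X, IsTotallyDisconnected (LS.Ws f (2*ε) x ∩ LS.Wu f (2*ε) x)) :
    ∀ x : X,
      connectedComponentIn (LS.Ws f ε x) x ⊆ LS.WsA f x ∧
      connectedComponentIn (LS.Wu f ε x) x ⊆ LS.WuA f x ∧
      connectedComponentIn (LS.Ws f ε x) x ⊆ LS.Vs f ε x ∧
      connectedComponentIn (LS.Wu f ε x) x ⊆ LS.Vu f ε x := by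
  intro x
  have hcw' : ∀ z : X, IsTotallyDisconnected (LS.Ws f.symm (2*ε) z ∩ LS.Wu f.symm (2*ε) z) := by
    intro z
    rw [LS.Ws_symm, LS.Wu_symm, Set.inter_comm]
    exact hcw z
  have hu : connectedComponentIn (LS.Wu f ε x) x ⊆ LS.WuA f x := by
    have h := LS.stable_main f.symm ε hε hcw' x
    rwa [LS.Ws_symm, LS.WsA_symm] at h
  have hs := LS.stable_main f ε hε hcw x
  exact ⟨hs, hu, fun y hy => ⟨hs hy, connectedComponentIn_subset _ _ hy⟩,
    fun y hy => ⟨hu hy, connectedComponentIn_subset _ _ hy⟩⟩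
end

section
/- The backward shift map σ on the Hilbert cube [0,1]^ℤ does not have a uniform asymptotic local-product-structure: for every 0 < ε < 1/2, δ ∈ (0, ε/2), and every family (k_r)_{r>0} ⊂ ℕ with k_r → ∞ as r → 0⁺, there exist x, y with d(x,y) < δ and a point z ∈ V^s_ε(x) ∩ V^u_ε(y) such that for some r > 0 with k_r large, d(σ^{k_r}(z), σ^{k_r}(x)) > r. -/
open Topology Filter Metric

namespace HC

/-- the Hilbert cube `[0,1]^ℤ` -/
abbrev H := ℤ → Set.Icc (0:ℝ) 1

/-- `ℤ`-iterates of the backward shift: `S m x = σ^m x`, `(S m x) i = x (i + m)` -/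
def S : ℤ → H → H := fun m x i => x (i + m)

/-- the metric `d(x,y) = Σ_{i∈ℤ} |x_i − y_i| / 2^{|i|}` -/
noncomputable def D (x y : H) : ℝ :=
  ∑' i : ℤ, |((x i : ℝ)) - ((y i : ℝ))| / 2 ^ i.natAbs

/-- local c-stable set of the shift -/
def Hs (c : ℝ) (x : H) : Set H := {z | ∀ k : ℤ, 0 ≤ k → D (S k z) (S k x) ≤ c}

/-- local c-unstable set of the shift -/
def Hu (c : ℝ) (x : H) : Set H := {z | ∀ k : ℤ, k ≤ 0 → D (S k z) (S k x) ≤ c}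

/-- stable set of the shift -/
def HsA (x : H) : Set H :=
  {z | Tendsto (fun k : ℤ => D (S k z) (S k x)) atTop (𝓝 0)}

/-- unstable set of the shift -/
def HuA (x : H) : Set H :=
  {z | Tendsto (fun k : ℤ => D (S k z) (S k x)) atBot (𝓝 0)}

/-- asymptotic local stable set -/
def HVs (c : ℝ) (x : H) : Set H := HsA x ∩ Hs c x

/-- asymptotic local unstable set -/
def HVu (c : ℝ) (x : H) : Set H := HuA x ∩ Hu c x

/-- `D^s_ε(x) = Π_{i<0}([x_i−ε, x_i+ε] ∩ [0,1]) × Π_{i≥0}{x_i}` -/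
def Ds (ε : ℝ) (x : H) : Set H :=
  {z | (∀ i : ℤ, i < 0 → |((z i : ℝ)) - ((x i : ℝ))| ≤ ε) ∧
       (∀ i : ℤ, 0 ≤ i → z i = x i)}

/-- `D^u_ε(x) = Π_{i<0}{x_i} × Π_{i≥0}([x_i−ε, x_i+ε] ∩ [0,1])` -/
def Du (ε : ℝ) (x : H) : Set H :=
  {z | (∀ i : ℤ, i < 0 → z i = x i) ∧
       (∀ i : ℤ, 0 ≤ i → |((z i : ℝ)) - ((x i : ℝ))| ≤ ε)}

/-- diameter of a set with respect to the metric `D` -/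
noncomputable def diamD (A : Set H) : ℝ := sSup {r | ∃ a ∈ A, ∃ b ∈ A, r = D a b}

end HC

-- auxiliary lemmas --

lemma aux_natAbs_atTop (n : ℤ) :
    Tendsto (fun m : ℤ => (n - m).natAbs) atTop atTop :=
  tendsto_atTop_atTop.2 fun b => ⟨n + b, fun m hm => by omega⟩

lemma aux_natAbs_atBot (n : ℤ) :
    Tendsto (fun m : ℤ => (n - m).natAbs) atBot atTop :=
  tendsto_atBot_atTop.2 fun b => ⟨n - b, fun m hm => by omega⟩

lemma aux_div_pow_tendsto (ε : ℝ) :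
    Tendsto (fun m : ℕ => ε / 2 ^ m) atTop (𝓝 0) := by
  have h : Tendsto (fun m : ℕ => (1/2 : ℝ) ^ m) atTop (𝓝 0) :=
    tendsto_pow_atTop_nhds_zero_of_lt_one (by norm_num) (by norm_num)
  have := h.const_mul ε
  simpa [div_eq_mul_inv, inv_pow] using this

/-- the backward shift on the Hilbert cube does not have a uniform
asymptotic local-product-structure. -/
theorem stmt_10 :
    ∀ ε : ℝ, 0 < ε → ε < 1/2 →
    ∀ δ : ℝ, 0 < δ → δ < ε/2 →
    ∀ k : ℝ → ℕ, Tendsto k (𝓝[>] (0:ℝ)) atTop →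
    ∃ x y z : HC.H, HC.D x y < δ ∧ z ∈ HC.HVs ε x ∩ HC.HVu ε y ∧
      ∃ r > (0:ℝ), HC.D (HC.S (k r) z) (HC.S (k r) x) > r := by
  intro ε hε hε2 δ hδ hδ2 k hk
  have hεmem : ε ∈ Set.Icc (0:ℝ) 1 := ⟨hε.le, by linarith⟩
  set n : ℤ := (k (ε/2) : ℤ) with hn
  set x : HC.H := fun _ => ⟨0, by norm_num⟩ with hx
  set z : HC.H := fun i => if i = n then ⟨ε, hεmem⟩ else ⟨0, by norm_num⟩ with hz
  have key : ∀ m : ℤ, HC.D (HC.S m z) (HC.S m x) = ε / 2 ^ (n - m).natAbs := by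
    intro m
    unfold HC.D HC.S
    rw [tsum_eq_single (n - m)]
    · have : (n - m) + m = n := by ring
      simp [hz, hx, this, abs_of_nonneg hε.le]
    · intro b hb
      have : b + m ≠ n := by omega
      simp [hz, hx, this]
  have hDxx : HC.D x x = 0 := by
    unfold HC.D
    simp
  refine ⟨x, x, z, by simpa [hDxx] using hδ, ⟨⟨?_, ?_⟩, ?_, ?_⟩, ε/2, by linarith, ?_⟩
  · -- HsA
    show Tendsto _ atTop (𝓝 0)
    simp only [key]
    exact (aux_div_pow_tendsto ε).comp (aux_natAbs_atTop n)
  · -- Hs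
    intro m _
    rw [key]
    exact div_le_self hε.le (one_le_pow₀ (by norm_num))
  · -- HuA
    show Tendsto _ atBot (𝓝 0)
    simp only [key]
    exact (aux_div_pow_tendsto ε).comp (aux_natAbs_atBot n)
  · -- Hu
    intro m _
    rw [key]
    exact div_le_self hε.le (one_le_pow₀ (by norm_num))
  · -- the crucial inequality
    have := key n
    rw [this]
    simp only [sub_self, Int.natAbs_zero, pow_zero, div_one]
    linarith
end
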